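/- Let d ≥ 1 and let A be a real d×d matrix such that every eigenvalue λ of A (i.e., every element of the spectrum of the complexification of A, viewed as a complex d×d matrix) satisfies Re(λ) < 0. Then exp(τ·A) tends to the zero matrix as τ → ∞. -/

import Mathlib

open Matrix NormedSpace

attribute [local instance] Matrix.linftyOpNormedRing Matrix.linftyOpNormedAlgebra

open Filter in
/-- scalar decay lemma : `exp (τμ) * (j!⁻¹ * τ^j) → 0` when `Re μ < 0`. -/
lemma aux_decay (μ : ℂ) (hμ : μ.re < 0) (j : ℕ) :
    Tendsto (fun τ : ℝ => Complex.exp (τ * μ) * ((Nat.factorial j : ℂ)⁻¹ * (τ : ℂ) ^ j))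
      atTop (nhds 0) := by
  have hb : (0 : ℝ) < -μ.re := by linarith
  have h0 : Tendsto (fun τ : ℝ => ((-μ.re) * τ) ^ j * Real.exp (-((-μ.re) * τ)))
      atTop (nhds 0) :=
    (Real.tendsto_pow_mul_exp_neg_atTop_nhds_zero j).comp (tendsto_id.const_mul_atTop hb)
  have h1 : Tendsto
      (fun τ : ℝ => ((Nat.factorial j : ℝ)⁻¹ * ((-μ.re)⁻¹) ^ j) *
        (((-μ.re) * τ) ^ j * Real.exp (-((-μ.re) * τ)))) atTop (nhds 0) := by
    simpa using h0.const_mul ((Nat.factorial j : ℝ)⁻¹ * ((-μ.re)⁻¹) ^ j)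
  rw [tendsto_zero_iff_norm_tendsto_zero]
  refine h1.congr' ?_
  filter_upwards [eventually_ge_atTop (0 : ℝ)] with τ hτ
  have hexp : Real.exp (-((-μ.re) * τ)) = Real.exp ((↑τ * μ).re) := by
    congr 1
    simp [Complex.mul_re]
    ring
  rw [hexp, norm_mul, norm_mul, Complex.norm_exp, norm_inv, norm_pow,
    Complex.norm_natCast, Complex.norm_real, Real.norm_eq_abs, abs_of_nonneg hτ]
  have hbne : (-μ.re) ≠ 0 := ne_of_gt hb
  field_simp
  ring_nf
  rw [← mul_pow, mul_inv_cancel₀ (by linarith : μ.re ≠ 0), one_pow, one_mul, mul_comm j 2, pow_mul,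
    neg_one_sq, one_pow, mul_one]

open Filter Module in
/-- pointwise decay of the complex matrix exponential. -/
lemma aux_mulVec_tendsto (d : ℕ) (M : Matrix (Fin d) (Fin d) ℂ)
    (hspec : ∀ lam ∈ spectrum ℂ M, lam.re < 0) (v : Fin d → ℂ) :
    Tendsto (fun τ : ℝ => exp (τ • M) *ᵥ v) atTop (nhds 0) := by
  set f : End ℂ (Fin d → ℂ) := Matrix.toLinAlgEquiv' M with hf
  -- the set of good vectors is a submodule
  set S : Submodule ℂ (Fin d → ℂ) :=
    { carrier := {w | Tendsto (fun τ : ℝ => exp (τ • M) *ᵥ w) atTop (nhds 0)}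
      add_mem' := by
        intro a b ha hb
        have := ha.add hb
        simp only [add_zero] at this
        refine this.congr fun τ => ?_
        rw [Matrix.mulVec_add]
      zero_mem' := by
        simpa [Matrix.mulVec_zero] using
          (tendsto_const_nhds : Tendsto (fun _ : ℝ => (0 : Fin d → ℂ)) atTop (nhds 0))
      smul_mem' := by
        intro c a ha
        have := ha.const_smul c
        simp only [smul_zero] at this
        refine this.congr fun τ => ?_
        rw [Matrix.mulVec_smul] } with hS
  suffices h : ∀ μ : ℂ, f.maxGenEigenspace μ ≤ S by
    have htop := Module.End.iSup_maxGenEigenspace_eq_top f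
    have hv : v ∈ (⊤ : Submodule ℂ (Fin d → ℂ)) := trivial
    rw [← htop] at hv
    exact iSup_le h hv
  intro μ w hw
  rcases eq_or_ne w 0 with rfl | hw0
  · exact S.zero_mem
  -- μ is an eigenvalue, hence in the spectrum
  obtain ⟨k, hk⟩ := (Module.End.mem_maxGenEigenspace f μ w).mp hw
  have hev : f.HasEigenvalue μ := by
    refine Module.End.hasEigenvalue_of_hasGenEigenvalue (k := k) ?_
    refine Submodule.ne_bot_iff _ |>.mpr ⟨w, ?_, hw0⟩
    exact (Module.End.mem_genEigenspace_nat).mpr hk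
  have hμspec : μ ∈ spectrum ℂ M := by
    have h1 := hev.mem_spectrum
    rwa [hf, AlgEquiv.spectrum_eq] at h1
  have hre : μ.re < 0 := hspec μ hμspec
  -- nilpotency on w
  set N : Matrix (Fin d) (Fin d) ℂ := M - μ • 1 with hN
  have hNk : (N ^ k) *ᵥ w = 0 := by
    have h2 : Matrix.toLinAlgEquiv' (N ^ k) = (f - μ • 1) ^ k := by
      rw [map_pow, map_sub, _root_.map_smul, _root_.map_one]
    have h3 : Matrix.toLinAlgEquiv' (N ^ k) w = 0 := by rw [h2]; exact hk
    rwa [Matrix.toLinAlgEquiv'_apply] at h3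
  have hNn : ∀ n, k ≤ n → (N ^ n) *ᵥ w = 0 := by
    intro n hn
    rw [← Nat.sub_add_cancel hn, pow_add, ← Matrix.mulVec_mulVec, hNk, Matrix.mulVec_zero]
  -- mulVec by w as a continuous linear map
  let g : Matrix (Fin d) (Fin d) ℂ →L[ℂ] (Fin d → ℂ) :=
    LinearMap.toContinuousLinearMap
      { toFun := fun X => X *ᵥ w
        map_add' := fun X Y => Matrix.add_mulVec X Y w
        map_smul' := fun c X => Matrix.smul_mulVec c X w }
  have hg : ∀ X : Matrix (Fin d) (Fin d) ℂ, g X = X *ᵥ w := fun _ => rfl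
  -- the key formula
  have key : ∀ τ : ℝ, exp (τ • M) *ᵥ w
      = ∑ j ∈ Finset.range k,
          (Complex.exp (τ * μ) * ((Nat.factorial j : ℂ)⁻¹ * (τ : ℂ) ^ j)) • (N ^ j *ᵥ w) := by
    intro τ
    have hsmul : ((τ : ℂ)) • M = τ • M := by
      ext i j
      simp [Complex.real_smul]
    have hsplit : τ • M = algebraMap ℂ (Matrix (Fin d) (Fin d) ℂ) ((τ : ℂ) * μ)
        + (τ : ℂ) • N := by
      rw [Algebra.algebraMap_eq_smul_one, hN, smul_sub, smul_smul, ← hsmul]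
      abel
    have hcomm : Commute (algebraMap ℂ (Matrix (Fin d) (Fin d) ℂ) ((τ : ℂ) * μ))
        ((τ : ℂ) • N) := Algebra.commutes _ _
    rw [hsplit, Matrix.exp_add_of_commute _ _ hcomm, show exp (algebraMap ℂ (Matrix (Fin d) (Fin d) ℂ)
      ((τ : ℂ) * μ)) = algebraMap ℂ _ (exp ((τ : ℂ) * μ)) from (algebraMap_exp_comm _).symm]
    have hexpN : exp ((τ : ℂ) • N) *ᵥ w
        = ∑ j ∈ Finset.range k, ((Nat.factorial j : ℂ)⁻¹ * (τ : ℂ) ^ j) • (N ^ j *ᵥ w) := by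
      rw [← hg, exp_eq_tsum (𝕂 := ℂ), g.map_tsum (expSeries_summable' (𝕂 := ℂ) ((τ : ℂ) • N))]
      rw [tsum_eq_sum (s := Finset.range k)]
      · refine Finset.sum_congr rfl fun j _ => ?_
        rw [hg, smul_pow, ← smul_assoc, Matrix.smul_mulVec, smul_eq_mul]
      · intro n hn
        rw [hg, smul_pow, ← smul_assoc, Matrix.smul_mulVec,
          hNn n (by simpa using hn), smul_zero]
    rw [← Algebra.smul_def, Matrix.smul_mulVec, hexpN, Finset.smul_sum,
      ← Complex.exp_eq_exp_ℂ]
    refine Finset.sum_congr rfl fun j _ => ?_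
    rw [smul_smul]
  -- conclude by summing the termwise limits
  have hsum : Tendsto (fun τ : ℝ => ∑ j ∈ Finset.range k,
      (Complex.exp (τ * μ) * ((Nat.factorial j : ℂ)⁻¹ * (τ : ℂ) ^ j)) • (N ^ j *ᵥ w))
      atTop (nhds 0) := by
    have h0 : Tendsto (fun τ : ℝ => ∑ j ∈ Finset.range k,
        (Complex.exp (τ * μ) * ((Nat.factorial j : ℂ)⁻¹ * (τ : ℂ) ^ j)) • (N ^ j *ᵥ w))
        atTop (nhds (∑ j ∈ Finset.range k, (0 : Fin d → ℂ))) := by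
      refine tendsto_finset_sum _ fun j _ => ?_
      have := (aux_decay μ hre j).smul_const (N ^ j *ᵥ w)
      simpa using this
    simpa using h0
  exact hsum.congr fun τ => (key τ).symm

theorem stmt_6 (d : ℕ) (hd : 1 ≤ d)
    (A : Matrix (Fin d) (Fin d) ℝ)
    (hspec : ∀ lam ∈ spectrum ℂ (A.map ((↑) : ℝ → ℂ)), lam.re < 0) :
    Filter.Tendsto (fun τ : ℝ => exp (τ • A)) Filter.atTop (nhds 0) := by
  set M : Matrix (Fin d) (Fin d) ℂ := A.map ((↑) : ℝ → ℂ) with hM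
  have hmap : ∀ τ : ℝ, (exp (τ • A)).map ((↑) : ℝ → ℂ) = exp (τ • M) := by
    intro τ
    have hcont : Continuous fun X : Matrix (Fin d) (Fin d) ℝ =>
        (Complex.ofRealHom.mapMatrix : Matrix (Fin d) (Fin d) ℝ →+*
          Matrix (Fin d) (Fin d) ℂ) X :=
      continuous_id.matrix_map Complex.continuous_ofReal
    have h1 := map_exp (Complex.ofRealHom.mapMatrix : Matrix (Fin d) (Fin d) ℝ →+*
      Matrix (Fin d) (Fin d) ℂ) hcont (τ • A)
    have h2 : (Complex.ofRealHom.mapMatrix : Matrix (Fin d) (Fin d) ℝ →+*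
        Matrix (Fin d) (Fin d) ℂ) (τ • A) = τ • M := by
      ext i j
      simp [RingHom.mapMatrix_apply, Matrix.map_apply, hM, Complex.real_smul]
    have h3 : (exp (τ • A)).map ((↑) : ℝ → ℂ) =
        (Complex.ofRealHom.mapMatrix : Matrix (Fin d) (Fin d) ℝ →+*
          Matrix (Fin d) (Fin d) ℂ) (exp (τ • A)) := rfl
    rw [h3]
    exact h1.trans (by rw [h2]; rfl)
  have H : ∀ i j : Fin d,
      Filter.Tendsto (fun τ : ℝ => exp (τ • A) i j) Filter.atTop (nhds 0) := by
    intro i j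
    have hvec := aux_mulVec_tendsto d M hspec (Pi.single j 1)
    have hij : Filter.Tendsto (fun τ : ℝ => (exp (τ • M) *ᵥ Pi.single j 1) i)
        Filter.atTop (nhds 0) := by
      have := (tendsto_pi_nhds.mp hvec) i
      simpa using this
    have hentry : ∀ τ : ℝ, (exp (τ • M) *ᵥ Pi.single j 1) i
        = ((exp (τ • A) i j : ℝ) : ℂ) := by
      intro τ
      rw [Matrix.mulVec_single_one, ← hmap τ]
      simp [Matrix.transpose_apply, Matrix.map_apply]
    have hre : Filter.Tendsto (fun τ : ℝ => ((exp (τ • A) i j : ℝ) : ℂ).re)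
        Filter.atTop (nhds 0) := by
      have := (Complex.continuous_re.tendsto 0).comp
        (hij.congr fun τ => hentry τ)
      simpa [Function.comp_def] using this
    simpa using hre
  exact tendsto_pi_nhds.mpr fun i => tendsto_pi_nhds.mpr fun j => H i j
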